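/- For l > −1/2 and k = l + 3/2, the Kummer function Φ(1/2 + l − k, 1 + 2l, ·) = Φ(−1, 1 + 2l, ·) has exactly one root, namely z = 1 + 2l; consequently, for l > 0 and k = l + 3/2 > 0, the unique nontrivial zero z of the Whittaker function M_{k,l} satisfies Re(z) = 1 + 2l < 2k, disproving the claim that all nontrivial zeros z of M_{k,l} with k > 0 satisfy Re(z) > 2k. -/
import Mathlib


open Complex

/-- The Kummer confluent hypergeometric function `Φ(a, b, z)`. -/
noncomputable def kummerPhi (a b z : ℂ) : ℂ :=
  ∑' k : ℕ, ((ascPochhammer ℂ k).eval a / (ascPochhammer ℂ k).eval b) * z ^ k /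
    (Nat.factorial k)

/-- The Whittaker function `M_{k,l}`. -/
noncomputable def whittakerM (k l z : ℂ) : ℂ :=
  Complex.exp (-z / 2) * z ^ ((1 : ℂ) / 2 + l) * kummerPhi (1 / 2 + l - k) (1 + 2 * l) z

lemma ascPochhammer_eval_zero' (n : ℕ) : (ascPochhammer ℂ (n + 1)).eval 0 = 0 := by
  rw [ascPochhammer_succ_left]
  simp

lemma ascPochhammer_eval_neg_one (n : ℕ) : (ascPochhammer ℂ (n + 2)).eval (-1) = 0 := by
  rw [ascPochhammer_succ_left]
  simp [ascPochhammer_eval_zero' n]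

lemma kummerPhi_neg_one (b z : ℂ) : kummerPhi (-1) b z = 1 - z / b := by
  unfold kummerPhi
  rw [tsum_eq_sum (s := {0, 1}) ?_]
  · simp [Finset.sum_pair, ascPochhammer_succ_left]
    ring
  · intro k hk
    match k, hk with
    | 0, hk => simp at hk
    | 1, hk => simp at hk
    | (n + 2), _ => simp [ascPochhammer_eval_neg_one n]

theorem saff_varga_counterexample (l : ℝ) (hl : -1 / 2 < l) :
    (∀ z : ℂ, kummerPhi (-1) (1 + 2 * l) z = 0 ↔ z = 1 + 2 * l) ∧
      (0 < l → ∀ z : ℂ, z ≠ 0 → whittakerM (l + 3 / 2) l z = 0 →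
        z.re = 1 + 2 * l ∧ z.re < 2 * (l + 3 / 2)) := by
  have hb : (1 + 2 * (l : ℂ)) ≠ 0 := by
    intro h
    have := congrArg Complex.re h
    simp at this
    linarith
  have key : ∀ z : ℂ, kummerPhi (-1) (1 + 2 * l) z = 0 ↔ z = 1 + 2 * l := by
    intro z
    rw [kummerPhi_neg_one, sub_eq_zero, eq_comm, div_eq_one_iff_eq hb]
  refine ⟨key, fun hl0 z hz hw => ?_⟩
  unfold whittakerM at hw
  have ha : (1 / 2 + (l : ℂ) - (l + 3 / 2)) = -1 := by ring
  rw [ha] at hw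
  rcases mul_eq_zero.1 hw with h | h
  · rcases mul_eq_zero.1 h with h | h
    · exact absurd h (Complex.exp_ne_zero _)
    · exact (hz ((Complex.cpow_eq_zero_iff z _).1 h).1).elim
  · have hzb := (key z).1 h
    subst hzb
    constructor
    · simp
    · simp
      linarith
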